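/- arXiv:2107.03574 — 2 statements merged into one kernel-verified Lean document; each statement's English description precedes it below -/
import Mathlib

section
/- Let p be a prime with p ≡ 3 (mod 4), and define the quaternary sequence g^2 of period 2p by g^2_t = φ(s^2_t, s^3_t) where s^2_t = b_t (indices mod p), s^3_t = c_t for even t and 1 - c_t for odd t, b and c are the Legendre sequences of period p, and φ is the Gray map φ(0,0)=0, φ(0,1)=1, φ(1,1)=2, φ(1,0)=3. Let G = ∑_{t=0}^{2p-1} g^2_t·4^t. Then gcd(G, 4^p - 1) = 1. -/
/-- The Legendre sequence `b` of period `p`. -/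
def legb (p : ℕ) [Fact p.Prime] (t : ℕ) : ℤ :=
  if (t : ZMod p) = 0 then 0 else (1 - legendreSym p (t : ℤ)) / 2

/-- The Legendre sequence `c` of period `p`. -/
def legc (p : ℕ) [Fact p.Prime] (t : ℕ) : ℤ :=
  if (t : ZMod p) = 0 then 1 else (1 - legendreSym p (t : ℤ)) / 2

/-- The Gray map `φ(a,e) = 2a - a(e-1) - (a-1)e`. -/
def gray (a e : ℤ) : ℤ := 2 * a - a * (e - 1) - (a - 1) * e

private lemma zmod_sum_range' (p : ℕ) [NeZero p] {M : Type*} [AddCommMonoid M]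
    (f : ZMod p → M) : ∑ x : ZMod p, f x = ∑ t ∈ Finset.range p, f (t : ZMod p) := by
  refine Finset.sum_nbij (fun x => x.val) (fun x _ => Finset.mem_range.mpr (ZMod.val_lt x))
    (fun a _ b _ h => ZMod.val_injective p h) (fun t ht => ?_)
    (fun x _ => by rw [ZMod.natCast_val, ZMod.cast_id])
  simp only [Finset.coe_range, Set.mem_image, Set.mem_Iio] at ht ⊢
  exact ⟨(t : ZMod p), Finset.mem_coe.mpr (Finset.mem_univ _), by rw [ZMod.val_natCast_of_lt ht]⟩

private lemma leg_period (p : ℕ) [Fact p.Prime] (t : ℕ) :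
    legendreSym p ((p + t : ℕ) : ℤ) = legendreSym p (t : ℤ) := by
  rw [legendreSym.mod, legendreSym.mod p (t:ℤ)]
  congr 1
  push_cast
  have : ((p:ℤ) + t) = t + p * 1 := by ring
  rw [this, Int.add_mul_emod_self_left]

private lemma cast_period (p : ℕ) [NeZero p] (t : ℕ) :
    ((p + t : ℕ) : ZMod p) = (t : ZMod p) := by push_cast [ZMod.natCast_self]; ring

private lemma legb_period (p : ℕ) [Fact p.Prime] (t : ℕ) : legb p (p + t) = legb p t := by
  unfold legb; rw [cast_period, leg_period]

private lemma legc_period (p : ℕ) [Fact p.Prime] (t : ℕ) : legc p (p + t) = legc p t := by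
  unfold legc; rw [cast_period, leg_period]

private lemma gray_pair (a e : ℤ) : gray a e + gray a (1 - e) = 4 * a + 1 := by
  unfold gray; ring

/-- Step 1: the big sum is congruent to `∑_{t<p} (4*legb t + 1) * 4^t` mod `4^p-1`. -/
private lemma step1 (p : ℕ) [Fact p.Prime] (h3 : p % 4 = 3) :
    (∑ t ∈ Finset.range (2 * p),
        (if t % 2 = 0 then gray (legb p t) (legc p t)
          else gray (legb p t) (1 - legc p t)) * 4 ^ t)
      ≡ ∑ t ∈ Finset.range p, (4 * legb p t + 1) * 4 ^ t [ZMOD ((4:ℤ)^p - 1)] := by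
  have hp2 : p % 2 = 1 := by omega
  have h4p : (4:ℤ)^p ≡ 1 [ZMOD ((4:ℤ)^p - 1)] :=
    (Int.modEq_iff_dvd.mpr ⟨1, by ring⟩).symm
  rw [two_mul, Finset.sum_range_add]
  have key : ∀ t ∈ Finset.range p,
      ((if t % 2 = 0 then gray (legb p t) (legc p t)
          else gray (legb p t) (1 - legc p t)) * 4 ^ t
        + (if (p + t) % 2 = 0 then gray (legb p (p + t)) (legc p (p + t))
          else gray (legb p (p + t)) (1 - legc p (p + t))) * 4 ^ (p + t))
      ≡ (4 * legb p t + 1) * 4 ^ t [ZMOD ((4:ℤ)^p - 1)] := by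
    intro t _
    rw [legb_period, legc_period, pow_add]
    have hmod : (p + t) % 2 = 1 - t % 2 := by omega
    rcases Nat.even_or_odd t with he | ho
    · have h1 : t % 2 = 0 := Nat.even_iff.mp he
      rw [hmod, h1]
      norm_num
      calc gray (legb p t) (legc p t) * 4 ^ t
            + gray (legb p t) (1 - legc p t) * (4 ^ p * 4 ^ t)
          ≡ gray (legb p t) (legc p t) * 4 ^ t
            + gray (legb p t) (1 - legc p t) * (1 * 4 ^ t) [ZMOD ((4:ℤ)^p - 1)] :=
            Int.ModEq.add_left _ (Int.ModEq.mul_left _ (Int.ModEq.mul_right _ h4p))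
        _ = (4 * legb p t + 1) * 4 ^ t := by rw [← gray_pair (legb p t) (legc p t)]; ring
    · have h1 : t % 2 = 1 := Nat.odd_iff.mp ho
      rw [hmod, h1]
      norm_num
      calc gray (legb p t) (1 - legc p t) * 4 ^ t
            + gray (legb p t) (legc p t) * (4 ^ p * 4 ^ t)
          ≡ gray (legb p t) (1 - legc p t) * 4 ^ t
            + gray (legb p t) (legc p t) * (1 * 4 ^ t) [ZMOD ((4:ℤ)^p - 1)] :=
            Int.ModEq.add_left _ (Int.ModEq.mul_left _ (Int.ModEq.mul_right _ h4p))
        _ = (4 * legb p t + 1) * 4 ^ t := by rw [← gray_pair (legb p t) (legc p t)]; ring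
  calc (∑ t ∈ Finset.range p, _) + (∑ t ∈ Finset.range p, _)
      = ∑ t ∈ Finset.range p,
        ((if t % 2 = 0 then gray (legb p t) (legc p t)
          else gray (legb p t) (1 - legc p t)) * 4 ^ t
        + (if (p + t) % 2 = 0 then gray (legb p (p + t)) (legc p (p + t))
          else gray (legb p (p + t)) (1 - legc p (p + t))) * 4 ^ (p + t)) := by
        rw [Finset.sum_add_distrib]
    _ ≡ ∑ t ∈ Finset.range p, (4 * legb p t + 1) * 4 ^ t [ZMOD ((4:ℤ)^p - 1)] := by
        unfold Int.ModEq
        rw [Finset.sum_int_mod, Finset.sum_congr rfl (fun t ht => key t ht), ← Finset.sum_int_mod]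

/-- Step 2: reduction to the "Gauss sum at 4". -/
private lemma step2 (p : ℕ) [Fact p.Prime] (h3 : p % 4 = 3) :
    (∑ t ∈ Finset.range p, (4 * legb p t + 1) * 4 ^ t)
      ≡ -2 * (∑ t ∈ Finset.range p, legendreSym p (t:ℤ) * 4 ^ t) - 2
        [ZMOD ((4:ℤ)^p - 1)] := by
  have hp0 : 0 < p := (Fact.out : p.Prime).pos
  have heq : ∀ t ∈ Finset.range p, (4 * legb p t + 1) * 4^t
      = (3 - 2 * legendreSym p (t:ℤ)) * 4^t - (if t = 0 then 2 else 0) := by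
    intro t ht
    rcases eq_or_ne t 0 with rfl | hne
    · simp [legb, legendreSym.at_zero]
    · have hcast : ((t:ℤ) : ZMod p) ≠ 0 := by
        push_cast
        rw [Ne, ZMod.natCast_eq_zero_iff]
        intro hdvd
        exact absurd (Nat.le_of_dvd (Nat.pos_of_ne_zero hne) hdvd)
          (by have := Finset.mem_range.mp ht; omega)
      have hcast' : ((t:ℕ) : ZMod p) ≠ 0 := by exact_mod_cast hcast
      rcases legendreSym.eq_one_or_neg_one (p := p) hcast with h1 | h1 <;>
        simp [legb, hcast', h1, hne] <;> ring
  rw [Finset.sum_congr rfl heq, Finset.sum_sub_distrib, Finset.sum_ite_eq' (Finset.range p) 0]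
  simp only [Finset.mem_range, hp0, if_true]
  have hgeom : (3:ℤ) * ∑ t ∈ Finset.range p, 4 ^ t = 4^p - 1 := by
    have := geom_sum_mul (4:ℤ) p
    linarith [this]
  have hrw : (∑ t ∈ Finset.range p, (3 - 2 * legendreSym p (t:ℤ)) * 4 ^ t) - 2
      = (4^p - 1) + (-2 * (∑ t ∈ Finset.range p, legendreSym p (t:ℤ) * 4 ^ t) - 2) := by
    rw [← hgeom]
    rw [Finset.sum_congr rfl (fun t _ => by ring :
      ∀ t ∈ Finset.range p, (3 - 2 * legendreSym p (t:ℤ)) * 4 ^ t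
        = 3 * 4^t + (-2) * (legendreSym p (t:ℤ) * 4 ^ t)), Finset.sum_add_distrib,
      ← Finset.mul_sum, ← Finset.mul_sum]
    ring
  rw [hrw]
  have h0 : ((4:ℤ)^p - 1) ≡ 0 [ZMOD ((4:ℤ)^p - 1)] := (Int.modEq_zero_iff_dvd).mpr dvd_rfl
  calc ((4:ℤ)^p - 1) + (-2 * (∑ t ∈ Finset.range p, legendreSym p (t:ℤ) * 4 ^ t) - 2)
      ≡ 0 + (-2 * (∑ t ∈ Finset.range p, legendreSym p (t:ℤ) * 4 ^ t) - 2)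
        [ZMOD ((4:ℤ)^p - 1)] := Int.ModEq.add_right _ h0
    _ = -2 * (∑ t ∈ Finset.range p, legendreSym p (t:ℤ) * 4 ^ t) - 2 := by ring

/-- The square of the "Gauss sum at 4" modulo a prime divisor `q ≠ 3` of `4^p - 1`. -/
private lemma gauss_lemma (p q : ℕ) [Fact p.Prime] [Fact q.Prime] (h3 : p % 4 = 3) (hq3 : q ≠ 3)
    (hdvd : (q:ℤ) ∣ (4:ℤ)^p - 1) :
    ((∑ t ∈ Finset.range p, legendreSym p (t:ℤ) * 4 ^ t : ℤ) : ZMod q)^2 = - (p : ZMod q)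
      ∧ p ∣ q - 1 := by
  haveI : NeZero p := ⟨(Fact.out : p.Prime).ne_zero⟩
  have hp2 : p ≠ 2 := by omega
  have h4p : (4 : ZMod q)^p = 1 := by
    have := (ZMod.intCast_zmod_eq_zero_iff_dvd _ q).mpr hdvd
    push_cast at this
    linear_combination this
  have hq2 : q ≠ 2 := by
    intro h
    have h2 : (2:ℤ) ∣ (4:ℤ)^p - 1 := by
      have := hdvd; rw [h] at this; exact_mod_cast this
    have h4 : (2:ℤ) ∣ (4:ℤ)^p := dvd_pow (by norm_num) (Fact.out : p.Prime).ne_zero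
    have h1 : (2:ℤ) ∣ 1 := by have := dvd_sub h4 h2; simpa using this
    norm_num at h1
  have h4ne1 : (4 : ZMod q) ≠ 1 := by
    intro h
    have h30 : ((3:ℕ) : ZMod q) = 0 := by
      have h' : (4 : ZMod q) - 1 = 0 := by rw [h]; ring
      push_cast
      linear_combination h'
    rw [ZMod.natCast_eq_zero_iff] at h30
    exact hq3 (((Nat.prime_dvd_prime_iff_eq Fact.out (by norm_num)).mp h30))
  have hord : orderOf (4 : ZMod q) = p := by
    rcases ((Fact.out : p.Prime).eq_one_or_self_of_dvd _ (orderOf_dvd_of_pow_eq_one h4p)) with h | h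
    · exact absurd (orderOf_eq_one_iff.mp h) h4ne1
    · exact h
  have hqm1 : p ∣ q - 1 := by
    have h40 : (4 : ZMod q) ≠ 0 := by
      intro h
      rw [h, zero_pow (Fact.out : p.Prime).ne_zero] at h4p
      exact zero_ne_one h4p
    have := orderOf_dvd_of_pow_eq_one (ZMod.pow_card_sub_one_eq_one h40)
    rwa [hord] at this
  -- the additive character
  let ψ : AddChar (ZMod p) (ZMod q) := AddChar.zmodChar p h4p
  have hψ : ψ.IsPrimitive := by
    apply AddChar.zmod_char_primitive_of_eq_one_only_at_zero
    intro a ha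
    rw [AddChar.zmodChar_apply] at ha
    have hdvd' : p ∣ a.val := by
      have := orderOf_dvd_of_pow_eq_one ha; rwa [hord] at this
    have hlt := ZMod.val_lt a
    have h0 : a.val = 0 := by
      by_contra hne
      exact absurd (Nat.le_of_dvd (Nat.pos_of_ne_zero hne) hdvd') (by omega)
    exact (ZMod.val_eq_zero a).mp h0
  -- the multiplicative character
  let χ : MulChar (ZMod p) (ZMod q) :=
    (quadraticChar (ZMod p)).ringHomComp (Int.castRingHom (ZMod q))
  have hcharp : ringChar (ZMod p) ≠ 2 := by rw [ZMod.ringChar_zmod_n]; exact hp2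
  haveI : Fact (2 < q) := ⟨by have := (Fact.out : q.Prime).two_le; omega⟩
  have hne : (-1 : ZMod q) ≠ 1 := ZMod.neg_one_ne_one
  have hχ1 : χ ≠ 1 := by
    rw [MulChar.ne_one_iff]
    obtain ⟨a, ha⟩ := quadraticChar_exists_neg_one' hcharp
    refine ⟨a, ?_⟩
    show ((quadraticChar (ZMod p) a : ℤ) : ZMod q) ≠ 1
    rw [ha]
    push_cast
    exact hne
  have hχ2 : χ.IsQuadratic := (quadraticChar_isQuadratic (ZMod p)).comp _
  have hsq := gaussSum_sq hχ1 hχ2 hψ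
  have hχneg : χ (-1) = -1 := by
    show ((quadraticChar (ZMod p) (-1) : ℤ) : ZMod q) = -1
    rw [quadraticChar_neg_one hcharp, ZMod.card, ZMod.χ₄_nat_three_mod_four h3]
    push_cast
    ring
  have hT : ((∑ t ∈ Finset.range p, legendreSym p (t:ℤ) * 4 ^ t : ℤ) : ZMod q)
      = gaussSum χ ψ := by
    rw [gaussSum, zmod_sum_range' p (fun x => χ x * ψ x)]
    push_cast
    refine Finset.sum_congr rfl fun t ht => ?_
    congr 1
    · show _ = ((quadraticChar (ZMod p) ((t : ZMod p)) : ℤ) : ZMod q)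
      rw [legendreSym]
      norm_cast
    · rw [AddChar.zmodChar_apply' h4p t]
  refine ⟨?_, hqm1⟩
  rw [hT, hsq, hχneg, ZMod.card]
  ring

/-- The sum of Legendre symbols over a full period vanishes. -/
private lemma leg_sum_zero (p : ℕ) [Fact p.Prime] (hp2 : p ≠ 2) :
    (∑ t ∈ Finset.range p, legendreSym p (t:ℤ)) = 0 := by
  haveI : NeZero p := ⟨(Fact.out : p.Prime).ne_zero⟩
  have hcharp : ringChar (ZMod p) ≠ 2 := by rw [ZMod.ringChar_zmod_n]; exact hp2
  have h := quadraticChar_sum_zero hcharp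
  rw [zmod_sum_range' p (fun x => quadraticChar (ZMod p) x)] at h
  rw [← h]
  refine Finset.sum_congr rfl fun t ht => ?_
  rw [legendreSym]
  norm_cast

theorem stmt9 (p : ℕ) [Fact p.Prime] (h3 : p % 4 = 3) :
    Int.gcd
      (∑ t ∈ Finset.range (2 * p),
        (if t % 2 = 0 then gray (legb p t) (legc p t)
          else gray (legb p t) (1 - legc p t)) * 4 ^ t)
      ((4:ℤ) ^ p - 1) = 1 := by
  set G : ℤ := ∑ t ∈ Finset.range (2 * p),
        (if t % 2 = 0 then gray (legb p t) (legc p t)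
          else gray (legb p t) (1 - legc p t)) * 4 ^ t with hG
  set T : ℤ := ∑ t ∈ Finset.range p, legendreSym p (t:ℤ) * 4 ^ t with hT
  have hcong : G ≡ -2 * T - 2 [ZMOD ((4:ℤ)^p - 1)] := (step1 p h3).trans (step2 p h3)
  by_contra hgcd
  have hp0 : 0 < p := (Fact.out : p.Prime).pos
  have hM1 : (1:ℤ) < 4^p - 1 := by
    have : (4:ℤ)^1 ≤ 4^p := pow_le_pow_right₀ (by norm_num) hp0
    norm_num at this ⊢
    omega
  have hd0 : Int.gcd G ((4:ℤ)^p - 1) ≠ 0 := by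
    intro h
    rw [Int.gcd_eq_zero_iff] at h
    omega
  obtain ⟨q, hq, hqd⟩ := Nat.exists_prime_and_dvd hgcd
  haveI : Fact q.Prime := ⟨hq⟩
  have hqG : (q:ℤ) ∣ G := dvd_trans (Int.natCast_dvd_natCast.mpr hqd) (Int.gcd_dvd_left _ _)
  have hqM : (q:ℤ) ∣ (4:ℤ)^p - 1 := dvd_trans (Int.natCast_dvd_natCast.mpr hqd) (Int.gcd_dvd_right _ _)
  have hq2 : q ≠ 2 := by
    intro h
    have h2 : (2:ℤ) ∣ (4:ℤ)^p - 1 := by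
      have := hqM; rw [h] at this; exact_mod_cast this
    have h4 : (2:ℤ) ∣ (4:ℤ)^p := dvd_pow (by norm_num) (by omega)
    have h1 : (2:ℤ) ∣ 1 := by have := dvd_sub h4 h2; simpa using this
    norm_num at h1
  have hq2T : (q:ℤ) ∣ -2 * (T + 1) := by
    have hMd : ((4:ℤ)^p - 1) ∣ (-2 * T - 2) - G := Int.ModEq.dvd hcong
    have h' : (q:ℤ) ∣ (-2 * T - 2) - G := hqM.trans hMd
    have h'' := dvd_add h' hqG
    have e : (-2 * T - 2) - G + G = -2 * (T + 1) := by ring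
    rwa [e] at h''
  have hqT : (q:ℤ) ∣ T + 1 := by
    rcases (Int.Prime.dvd_mul' (by exact_mod_cast hq) hq2T) with h | h
    · exfalso
      have h2' : (q:ℤ) ∣ 2 := (dvd_neg.mp (by simpa using h) : (q:ℤ) ∣ 2)
      have := Int.le_of_dvd (by norm_num) h2'
      have := hq.two_le
      omega
    · exact h
  rcases eq_or_ne q 3 with rfl | hq3
  · have hT3 : ((T : ℤ) : ZMod 3) = 0 := by
      have h43 : (4 : ZMod 3) = 1 := rfl
      have heq : ((T : ℤ) : ZMod 3)
          = ((∑ t ∈ Finset.range p, legendreSym p (t:ℤ) : ℤ) : ZMod 3) := by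
        rw [hT]
        push_cast
        refine Finset.sum_congr rfl fun t _ => ?_
        rw [h43, one_pow, mul_one]
      rw [heq, leg_sum_zero p (by omega)]
      norm_cast
    have h0 : ((T + 1 : ℤ) : ZMod 3) = 0 := by
      rw [ZMod.intCast_zmod_eq_zero_iff_dvd]; exact_mod_cast hqT
    rw [Int.cast_add, hT3] at h0
    norm_num at h0
  obtain ⟨hsq, hord⟩ := gauss_lemma p q h3 hq3 hqM
  have hTq : ((T : ℤ) : ZMod q) = -1 := by
    have h0 : ((T + 1 : ℤ) : ZMod q) = 0 := by
      rw [ZMod.intCast_zmod_eq_zero_iff_dvd]; exact_mod_cast hqT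
    push_cast at h0
    linear_combination h0
  rw [hTq] at hsq
  have hp1 : ((p + 1 : ℕ) : ZMod q) = 0 := by
    push_cast
    linear_combination hsq
  rw [ZMod.natCast_eq_zero_iff] at hp1
  have hqle : q ≤ p + 1 := Nat.le_of_dvd (by omega) hp1
  have hple : p ≤ q - 1 := Nat.le_of_dvd (by have := hq.two_le; omega) hord
  have hqeq : q = p + 1 := by have := hq.two_le; omega
  have hqeven : 2 ∣ q := by omega
  have := (hq.eq_one_or_self_of_dvd 2 hqeven)
  omega
end

section
/- With g^3 and G as in the Jang et al. construction from a binary ideal-autocorrelation sequence s of period 2^n - 1 with weight 2^{n-1}, gcd(G, 4^{2^n-1} - 1) = 1; consequently gcd(G, 4^{2(2^n-1)} - 1) = (4^{2^n-1}+1)/5 and the 4-adic complexity of g^3 is log_4(5·(4^{2^n-1} - 1)). -/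
lemma sum_modeq {ι : Type*} (s : Finset ι) (R : ℤ) (f g : ι → ℤ)
    (h : ∀ i ∈ s, f i ≡ g i [ZMOD R]) :
    ∑ i ∈ s, f i ≡ ∑ i ∈ s, g i [ZMOD R] := by
  rw [Int.modEq_iff_dvd]
  have := Finset.dvd_sum (fun i hi => (Int.modEq_iff_dvd.mp (h i hi)))
  simpa [Finset.sum_sub_distrib] using this

lemma pow_cong (N a b : ℕ) (h : a % N = b % N) :
    (4:ℤ)^a ≡ 4^b [ZMOD ((4:ℤ)^N - 1)] := by
  have h4 : (1:ℤ) ≡ 4^N [ZMOD ((4:ℤ)^N - 1)] := Int.modEq_iff_dvd.mpr ⟨1, by ring⟩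
  have key : ∀ a : ℕ, (4:ℤ)^a ≡ 4^(a % N) [ZMOD ((4:ℤ)^N - 1)] := by
    intro a
    conv_lhs => rw [← Nat.div_add_mod a N]
    rw [pow_add, pow_mul]
    calc ((4:ℤ)^N)^(a/N) * 4^(a%N) ≡ 1^(a/N) * 4^(a%N) [ZMOD ((4:ℤ)^N-1)] :=
          (h4.symm.pow _).mul_right _
      _ = 4^(a%N) := by ring
  calc (4:ℤ)^a ≡ 4^(a%N) [ZMOD _] := key a
    _ = 4^(b%N) := by rw [h]
    _ ≡ 4^b [ZMOD _] := (key b).symm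

theorem stmt16 (n : ℕ) (hn : 2 ≤ n) (s : ℕ → ℕ)
    (hs01 : ∀ t, s t = 0 ∨ s t = 1)
    (hper : ∀ t, s (t + (2 ^ n - 1)) = s t)
    (hauto : ∀ f, 0 < f → f < 2 ^ n - 1 →
      ∑ l ∈ Finset.range (2 ^ n - 1), (-1 : ℤ) ^ (s (l + f) + s l) = -1)
    (hw : ((Finset.range (2 ^ n - 1)).filter (fun t => s t = 1)).card = 2 ^ (n - 1))
    (G : ℤ)
    (hG : G = ∑ t ∈ Finset.range (2 * (2 ^ n - 1)),
      ((t % 2 + 2 * s (t % (2 ^ n - 1)) : ℕ) : ℤ) * 4 ^ t) :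
    Int.gcd G ((4:ℤ) ^ (2 ^ n - 1) - 1) = 1 ∧
    (Int.gcd G ((4:ℤ) ^ (2 * (2 ^ n - 1)) - 1) : ℤ) = ((4:ℤ) ^ (2 ^ n - 1) + 1) / 5 ∧
    Real.logb 4 (((4:ℝ) ^ (2 * (2 ^ n - 1)) - 1) /
        (Int.gcd G ((4:ℤ) ^ (2 * (2 ^ n - 1)) - 1) : ℝ)) =
      Real.logb 4 (5 * ((4:ℝ) ^ (2 ^ n - 1) - 1)) := by
  set N := 2 ^ n - 1 with hNdef
  -- basic numerics
  have h2n1 : 2 ≤ 2 ^ (n-1) := by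
    calc 2 = 2^1 := rfl
    _ ≤ 2^(n-1) := Nat.pow_le_pow_right (by norm_num) (by omega)
  have h2n : 2 ^ n = 2 * 2 ^ (n-1) := by
    rw [← pow_succ']; congr 1; omega
  have hN3 : 3 ≤ N := by omega
  have hN0 : 0 < N := by omega
  have hNodd : N % 2 = 1 := by omega
  -- full periodicity
  have hsper : ∀ t, s (t % N) = s t := by
    intro t
    exact (Function.Periodic.map_mod_nat hper t)
  set R : ℤ := (4:ℤ)^N - 1 with hRdef
  set B : ℤ := (4:ℤ)^N + 1 with hBdef
  set T : ℤ := ∑ t ∈ Finset.range N, (-1:ℤ)^(s t) * 4^t with hTdef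
  set K : ℤ := ∑ t ∈ Finset.range N, (4:ℤ)^t with hKdef
  have h3K : 3 * K = R := by
    have := mul_geom_sum (4:ℤ) N
    rw [hKdef, hRdef]; linarith
  -- split G
  have hGsplit : G = (∑ t ∈ Finset.range N, ((t % 2 + 2 * s t : ℕ) : ℤ) * 4 ^ t)
      + ∑ t ∈ Finset.range N, (((N + t) % 2 + 2 * s t : ℕ) : ℤ) * 4 ^ (N + t) := by
    rw [hG, two_mul, Finset.sum_range_add]
    congr 1
    · apply Finset.sum_congr rfl; intro t ht
      rw [Nat.mod_eq_of_lt (Finset.mem_range.mp ht)]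
    · apply Finset.sum_congr rfl; intro t ht
      rw [Nat.add_mod_left, Nat.mod_eq_of_lt (Finset.mem_range.mp ht)]
  have hpar : ∀ t : ℕ, (N + t) % 2 = (1 + t) % 2 := by intro t; omega
  have hmod2 : ∀ t : ℕ, ((t:ℤ) % 2) + ((1 + (t:ℤ)) % 2) = 1 := by intro t; omega
  -- G mod R
  have hGR : G ≡ R - 2*T [ZMOD R] := by
    have hS2 : (∑ t ∈ Finset.range N, (((N + t) % 2 + 2 * s t : ℕ) : ℤ) * 4 ^ (N + t))
        ≡ ∑ t ∈ Finset.range N, (((N + t) % 2 + 2 * s t : ℕ) : ℤ) * 4 ^ t [ZMOD R] := by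
      apply sum_modeq
      intro t _
      exact (pow_cong N (N + t) t (Nat.add_mod_left N t)).mul_left _
    have hcomb : (∑ t ∈ Finset.range N, ((t % 2 + 2 * s t : ℕ) : ℤ) * 4 ^ t)
        + ∑ t ∈ Finset.range N, (((N + t) % 2 + 2 * s t : ℕ) : ℤ) * 4 ^ t
        = R - 2 * T := by
      rw [← Finset.sum_add_distrib]
      have hterm : ∀ t ∈ Finset.range N,
          ((t % 2 + 2 * s t : ℕ) : ℤ) * 4 ^ t + (((N + t) % 2 + 2 * s t : ℕ) : ℤ) * 4 ^ t
          = ((3:ℤ) - 2 * (-1:ℤ)^(s t)) * 4 ^ t := by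
        intro t _
        rw [hpar t]
        rcases hs01 t with h | h <;> rw [h] <;> push_cast <;>
          linear_combination (4:ℤ)^t * hmod2 t
      calc ∑ t ∈ Finset.range N,
            (((t % 2 + 2 * s t : ℕ) : ℤ) * 4 ^ t + (((N + t) % 2 + 2 * s t : ℕ) : ℤ) * 4 ^ t)
          = ∑ t ∈ Finset.range N, ((3:ℤ) - 2 * (-1:ℤ)^(s t)) * 4 ^ t :=
            Finset.sum_congr rfl hterm
        _ = 3 * K - 2 * T := by
            rw [hTdef, hKdef, Finset.mul_sum, Finset.mul_sum, ← Finset.sum_sub_distrib]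
            exact Finset.sum_congr rfl (fun t _ => by ring)
        _ = R - 2 * T := by rw [h3K]
    calc G = _ + _ := hGsplit
      _ ≡ (∑ t ∈ Finset.range N, ((t % 2 + 2 * s t : ℕ) : ℤ) * 4 ^ t)
          + ∑ t ∈ Finset.range N, (((N + t) % 2 + 2 * s t : ℕ) : ℤ) * 4 ^ t [ZMOD R] :=
        (Int.ModEq.refl _).add hS2
      _ = R - 2 * T := hcomb
  -- divisibility by 5
  have hoddN : Odd N := Nat.odd_iff.mpr hNodd
  have hQ5 : (5:ℤ) ∣ B := by
    have h41 : (4:ℤ) ≡ -1 [ZMOD 5] := by decide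
    have h4N : (4:ℤ)^N ≡ (-1)^N [ZMOD 5] := h41.pow N
    rw [hoddN.neg_one_pow] at h4N
    have := Int.ModEq.add_right 1 h4N
    simpa [hBdef] using (Int.modEq_zero_iff_dvd.mp (by simpa using this))
  set Q : ℤ := B / 5 with hQdef
  have h5Q : 5 * Q = B := Int.mul_ediv_cancel' hQ5
  have h4N4 : (4:ℤ) ≤ 4^N := le_self_pow₀ (by norm_num) (by omega)
  have hQpos : 0 < Q := by
    have hB : (5:ℤ) ≤ B := by rw [hBdef]; linarith
    linarith
  have h5Q' : (4:ℤ)^N + 1 = 5 * Q := by rw [← hBdef]; linarith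
  -- G mod B
  have hGB : G ≡ -Q [ZMOD B] := by
    have h4NB : (4:ℤ)^N ≡ -1 [ZMOD B] := by
      rw [Int.modEq_iff_dvd]; exact ⟨-1, by rw [hBdef]; ring⟩
    have hS2 : (∑ t ∈ Finset.range N, (((N + t) % 2 + 2 * s t : ℕ) : ℤ) * 4 ^ (N + t))
        ≡ ∑ t ∈ Finset.range N, -((((N + t) % 2 + 2 * s t : ℕ) : ℤ) * 4 ^ t) [ZMOD B] := by
      apply sum_modeq
      intro t _
      calc (((N + t) % 2 + 2 * s t : ℕ) : ℤ) * 4 ^ (N + t)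
          = (((N + t) % 2 + 2 * s t : ℕ) : ℤ) * 4 ^ t * (4:ℤ)^N := by rw [pow_add]; ring
        _ ≡ (((N + t) % 2 + 2 * s t : ℕ) : ℤ) * 4 ^ t * (-1) [ZMOD B] :=
            h4NB.mul_left _
        _ = -((((N + t) % 2 + 2 * s t : ℕ) : ℤ) * 4 ^ t) := by ring
    have hcomb : (∑ t ∈ Finset.range N, ((t % 2 + 2 * s t : ℕ) : ℤ) * 4 ^ t)
        + ∑ t ∈ Finset.range N, -((((N + t) % 2 + 2 * s t : ℕ) : ℤ) * 4 ^ t)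
        = -Q := by
      rw [← Finset.sum_add_distrib]
      have hterm : ∀ t ∈ Finset.range N,
          ((t % 2 + 2 * s t : ℕ) : ℤ) * 4 ^ t + -((((N + t) % 2 + 2 * s t : ℕ) : ℤ) * 4 ^ t)
          = -((-4:ℤ) ^ t) := by
        intro t _
        rw [hpar t]
        have hneg : (-4:ℤ)^t = (-1)^t * 4^t := by rw [neg_pow]
        rcases Nat.even_or_odd t with h | h
        · have h2 : t % 2 = 0 := Nat.even_iff.mp h
          have h3 : (1 + t) % 2 = 1 := by omega
          rw [h2, h3, hneg, h.neg_one_pow]; push_cast; ring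
        · have h2 : t % 2 = 1 := Nat.odd_iff.mp h
          have h3 : (1 + t) % 2 = 0 := by omega
          rw [h2, h3, hneg, h.neg_one_pow]; push_cast; ring
      have hgeo : ∑ t ∈ Finset.range N, ((-4:ℤ)) ^ t = Q := by
        have h1 := mul_geom_sum (-4:ℤ) N
        have h2 : (-4:ℤ)^N = -(4^N) := hoddN.neg_pow 4
        rw [h2] at h1
        have h3 : ((-4:ℤ) - 1) = -5 := by norm_num
        rw [h3] at h1
        linarith
      calc ∑ t ∈ Finset.range N,
            (((t % 2 + 2 * s t : ℕ) : ℤ) * 4 ^ t + -((((N + t) % 2 + 2 * s t : ℕ) : ℤ) * 4 ^ t))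
          = ∑ t ∈ Finset.range N, -((-4:ℤ) ^ t) := Finset.sum_congr rfl hterm
        _ = -∑ t ∈ Finset.range N, ((-4:ℤ)) ^ t := by
            rw [← Finset.sum_neg_distrib]
        _ = -Q := by rw [hgeo]
    calc G = _ + _ := hGsplit
      _ ≡ (∑ t ∈ Finset.range N, ((t % 2 + 2 * s t : ℕ) : ℤ) * 4 ^ t)
          + ∑ t ∈ Finset.range N, -((((N + t) % 2 + 2 * s t : ℕ) : ℤ) * 4 ^ t) [ZMOD B] :=
        (Int.ModEq.refl _).add hS2
      _ = -Q := hcomb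
  -- 3 does not divide T
  have hT3 : ¬ (3:ℤ) ∣ T := by
    have hsum1 : ∑ t ∈ Finset.range N, ((s t : ℤ)) = ((2^(n-1) : ℕ) : ℤ) := by
      have h1 : ∑ t ∈ Finset.range N, ((s t : ℤ))
          = ∑ t ∈ Finset.range N, (if s t = 1 then (1:ℤ) else 0) := by
        apply Finset.sum_congr rfl
        intro t _
        rcases hs01 t with h | h <;> rw [h] <;> simp
      rw [h1, Finset.sum_boole, hw]
    have hsum : ∑ t ∈ Finset.range N, (-1:ℤ)^(s t) = -1 := by
      have h2' : ∀ t ∈ Finset.range N, (-1:ℤ)^(s t) = 1 - 2*((s t : ℤ)) := by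
        intro t _
        rcases hs01 t with h | h <;> rw [h] <;> norm_num
      calc ∑ t ∈ Finset.range N, (-1:ℤ)^(s t)
          = ∑ t ∈ Finset.range N, ((1:ℤ) - 2*((s t : ℤ))) := Finset.sum_congr rfl h2'
        _ = (N : ℤ) - 2 * ∑ t ∈ Finset.range N, ((s t : ℤ)) := by
            rw [Finset.sum_sub_distrib, ← Finset.mul_sum, Finset.sum_const,
              Finset.card_range, nsmul_eq_mul, mul_one]
        _ = -1 := by rw [hsum1]; omega
    have hT3' : T ≡ -1 [ZMOD 3] := by
      calc T = ∑ t ∈ Finset.range N, (-1:ℤ)^(s t) * 4^t := hTdef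
        _ ≡ ∑ t ∈ Finset.range N, (-1:ℤ)^(s t) * 1^t [ZMOD 3] :=
            sum_modeq _ _ _ _ (fun t _ =>
              (((show (4:ℤ) ≡ 1 [ZMOD 3] by decide).pow t).mul_left _))
        _ = -1 := by simp only [one_pow, mul_one]; exact hsum
    intro hdvd
    have h1 : (3:ℤ) ∣ -1 - T := Int.modEq_iff_dvd.mp hT3'
    have h2 : (3:ℤ) ∣ (-1 : ℤ) := by
      have : (-1 : ℤ) = (-1 - T) + T := by ring
      rw [this]; exact dvd_add h1 hdvd
    norm_num at h2
  -- the autocorrelation identity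
  set T' : ℤ := ∑ u ∈ Finset.range N, (-1:ℤ)^(s u) * 4^(N - u) with hT'def
  have hTT' : T * T' ≡ (N:ℤ) + 1 - K [ZMOD R] := by
    have h1 : T * T' = ∑ u ∈ Finset.range N, ∑ t ∈ Finset.range N,
        (-1:ℤ)^(s t + s u) * 4^(t + (N - u)) := by
      rw [hTdef, hT'def, Finset.sum_mul_sum, Finset.sum_comm]
      apply Finset.sum_congr rfl; intro u _
      apply Finset.sum_congr rfl; intro t _
      rw [pow_add, pow_add]; ring
    have h2 : ∀ u ∈ Finset.range N,
        (∑ t ∈ Finset.range N, (-1:ℤ)^(s t + s u) * 4^(t + (N - u)))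
        ≡ ∑ f ∈ Finset.range N, (-1:ℤ)^(s (u + f) + s u) * 4^f [ZMOD R] := by
      intro u hu
      have hu' := Finset.mem_range.mp hu
      have hij : ∀ f, f < N → ((u + f) % N + (N - u)) % N = f := by
        intro f hf
        calc ((u + f) % N + (N - u)) % N
            = ((u + f) + (N - u)) % N := (Nat.mod_modEq (u+f) N).add_right (N-u)
          _ = (f + N) % N := by congr 1; omega
          _ = f % N := Nat.add_mod_right f N
          _ = f := Nat.mod_eq_of_lt hf
      have hji : ∀ t, t < N → (u + (t + (N - u)) % N) % N = t := by
        intro t ht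
        calc (u + (t + (N - u)) % N) % N
            = (u + (t + (N - u))) % N := (Nat.mod_modEq (t + (N-u)) N).add_left u
          _ = (t + N) % N := by congr 1; omega
          _ = t % N := Nat.add_mod_right t N
          _ = t := Nat.mod_eq_of_lt ht
      have hre : (∑ t ∈ Finset.range N, (-1:ℤ)^(s t + s u) * 4^(t + (N - u)))
          = ∑ f ∈ Finset.range N, (-1:ℤ)^(s ((u + f) % N) + s u) * 4^((u + f) % N + (N - u)) := by
        apply Finset.sum_nbij' (fun t => (t + (N - u)) % N) (fun f => (u + f) % N)
        · intro t _; exact Finset.mem_range.mpr (Nat.mod_lt _ hN0)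
        · intro f _; exact Finset.mem_range.mpr (Nat.mod_lt _ hN0)
        · intro t ht; exact hji t (Finset.mem_range.mp ht)
        · intro f hf; exact hij f (Finset.mem_range.mp hf)
        · intro t ht
          rw [hji t (Finset.mem_range.mp ht)]
      rw [hre]
      apply sum_modeq
      intro f hf
      have hf' := Finset.mem_range.mp hf
      rw [hsper (u + f)]
      exact (pow_cong N ((u + f) % N + (N - u)) f
        (by rw [hij f hf', Nat.mod_eq_of_lt hf'])).mul_left _
    have h3 : T * T' ≡ ∑ f ∈ Finset.range N,
        (∑ u ∈ Finset.range N, (-1:ℤ)^(s (u + f) + s u)) * 4^f [ZMOD R] := by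
      rw [h1]
      calc ∑ u ∈ Finset.range N, ∑ t ∈ Finset.range N, (-1:ℤ)^(s t + s u) * 4^(t + (N - u))
          ≡ ∑ u ∈ Finset.range N, ∑ f ∈ Finset.range N,
              (-1:ℤ)^(s (u + f) + s u) * 4^f [ZMOD R] := sum_modeq _ _ _ _ h2
        _ = ∑ f ∈ Finset.range N, ∑ u ∈ Finset.range N,
              (-1:ℤ)^(s (u + f) + s u) * 4^f := Finset.sum_comm
        _ = ∑ f ∈ Finset.range N,
              (∑ u ∈ Finset.range N, (-1:ℤ)^(s (u + f) + s u)) * 4^f := by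
            exact Finset.sum_congr rfl (fun f _ => (Finset.sum_mul _ _ _).symm)
    have h4 : ∑ f ∈ Finset.range N,
        (∑ u ∈ Finset.range N, (-1:ℤ)^(s (u + f) + s u)) * 4^f = (N:ℤ) + 1 - K := by
      obtain ⟨M, hM⟩ : ∃ M, N = M + 1 := ⟨N - 1, by omega⟩
      have hKM : K = (∑ i ∈ Finset.range M, (4:ℤ)^(i+1)) + 1 := by
        rw [hKdef, hM, Finset.sum_range_succ']
        norm_num
      rw [hM, Finset.sum_range_succ']
      have hzero : (∑ u ∈ Finset.range (M+1), (-1:ℤ)^(s (u + 0) + s u)) * 4^0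
          = ((M:ℤ) + 1) := by
        have : ∀ u ∈ Finset.range (M+1), (-1:ℤ)^(s (u + 0) + s u) = 1 := by
          intro u _
          rw [Nat.add_zero, ← two_mul]
          exact Even.neg_one_pow ⟨s u, by ring⟩
        rw [Finset.sum_congr rfl this, Finset.sum_const, Finset.card_range]
        push_cast; ring
      have hposf : ∀ i ∈ Finset.range M,
          (∑ u ∈ Finset.range (M+1), (-1:ℤ)^(s (u + (i+1)) + s u)) * 4^(i+1)
          = -(4:ℤ)^(i+1) := by
        intro i hi
        have hi' := Finset.mem_range.mp hi
        have := hauto (i+1) (Nat.succ_pos i) (by omega)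
        rw [hM] at this
        rw [this]; ring
      rw [Finset.sum_congr rfl hposf, hzero]
      rw [hKM]
      push_cast [hM]
      rw [Finset.sum_neg_distrib]
      ring
    calc T * T' ≡ _ [ZMOD R] := h3
      _ = (N:ℤ) + 1 - K := h4
  -- first gcd
  have hgcd1 : Int.gcd G R = 1 := by
    by_contra hne
    obtain ⟨p, hp, hpd⟩ := Nat.exists_prime_and_dvd hne
    have hpG : (p:ℤ) ∣ G :=
      dvd_trans (Int.natCast_dvd_natCast.mpr hpd) (Int.gcd_dvd_left _ _)
    have hpR : (p:ℤ) ∣ R :=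
      dvd_trans (Int.natCast_dvd_natCast.mpr hpd) (Int.gcd_dvd_right _ _)
    have hpp : Prime (p:ℤ) := Nat.prime_iff_prime_int.mp hp
    have hp2 : p ≠ 2 := by
      rintro rfl
      have h4e : (4:ℤ)^N ≡ 0 [ZMOD 2] := by
        calc (4:ℤ)^N ≡ 0^N [ZMOD 2] := Int.ModEq.pow N (by decide)
          _ = 0 := zero_pow (by omega)
      have hRodd : R ≡ -1 [ZMOD 2] := by
        have := h4e.sub_right (1:ℤ)
        rw [hRdef]
        simpa using this
      have h0 : (0:ℤ) ≡ -1 [ZMOD 2] :=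
        ((Int.modEq_zero_iff_dvd.mpr (by exact_mod_cast hpR)).symm).trans hRodd
      have := Int.modEq_iff_dvd.mp h0
      norm_num at this
    -- p divides T
    have hdR : R ∣ (R - 2*T) - G := Int.modEq_iff_dvd.mp hGR
    have hp2T : (p:ℤ) ∣ 2 * T := by
      have heq : (2:ℤ) * T = R - ((R - 2*T) - G) - G := by ring
      rw [heq]
      exact dvd_sub (dvd_sub hpR (dvd_trans hpR hdR)) hpG
    have hpT : (p:ℤ) ∣ T := by
      rcases (hpp.dvd_mul).mp hp2T with h | h
      · exfalso
        have : p ∣ 2 := by exact_mod_cast h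
        exact hp2 ((Nat.prime_dvd_prime_iff_eq hp Nat.prime_two).mp this)
      · exact h
    -- p divides N + 1 - K
    have hdTT : R ∣ ((N:ℤ) + 1 - K) - T * T' := Int.modEq_iff_dvd.mp hTT'
    have hpNK : (p:ℤ) ∣ (N:ℤ) + 1 - K := by
      have heq : (N:ℤ) + 1 - K = (((N:ℤ) + 1 - K) - T * T') + T * T' := by ring
      rw [heq]
      exact dvd_add (dvd_trans hpR hdTT) (hpT.mul_right _)
    by_cases hp3 : p = 3
    · subst hp3
      exact hT3 (by exact_mod_cast hpT)
    · have hpK : (p:ℤ) ∣ K := by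
        rcases (hpp.dvd_mul).mp (h3K ▸ hpR : (p:ℤ) ∣ 3 * K) with h | h
        · exfalso
          have : p ∣ 3 := by exact_mod_cast h
          exact hp3 ((Nat.prime_dvd_prime_iff_eq hp (by norm_num)).mp this)
        · exact h
      have hpPow : (p:ℤ) ∣ (2:ℤ)^n := by
        have hNval : (N:ℤ) + 1 = (2:ℤ)^n := by
          have : ((2^n : ℕ) : ℤ) = (2:ℤ)^n := by push_cast; ring
          omega
        have heq : (2:ℤ)^n = ((N:ℤ) + 1 - K) + K := by rw [← hNval]; ring
        rw [heq]
        exact dvd_add hpNK hpK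
      have : (p:ℤ) ∣ 2 := hpp.dvd_of_dvd_pow hpPow
      have : p ∣ 2 := by exact_mod_cast this
      exact hp2 ((Nat.prime_dvd_prime_iff_eq hp Nat.prime_two).mp this)
  -- second gcd
  have hgcd2 : (Int.gcd G ((4:ℤ) ^ (2 * N) - 1) : ℤ) = Q := by
    have hfac : (4:ℤ)^(2*N) - 1 = R * B := by
      rw [hRdef, hBdef, two_mul, pow_add]; ring
    have hstep : Int.gcd G ((4:ℤ)^(2*N) - 1) = Int.gcd G B := by
      rw [hfac]
      show Nat.gcd G.natAbs (R * B).natAbs = Nat.gcd G.natAbs B.natAbs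
      rw [Int.natAbs_mul]
      exact Nat.Coprime.gcd_mul_left_cancel_right _ (Nat.Coprime.symm hgcd1)
    rw [hstep]
    have hBdG : B ∣ G + Q := by
      have h1 : B ∣ -Q - G := Int.modEq_iff_dvd.mp hGB
      have : G + Q = -(-Q - G) := by ring
      rw [this]
      exact dvd_neg.mpr h1
    obtain ⟨k, hk⟩ := hBdG
    have hQG : Q ∣ G := ⟨5*k - 1, by linear_combination hk - k * h5Q⟩
    have hQB : Q ∣ B := ⟨5, by linarith⟩
    have hQd : Q ∣ ((Int.gcd G B : ℕ) : ℤ) := Int.dvd_coe_gcd hQG hQB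
    have hdQ : ((Int.gcd G B : ℕ) : ℤ) ∣ Q := by
      have h1 : ((Int.gcd G B : ℕ) : ℤ) ∣ G := Int.gcd_dvd_left _ _
      have h2 : ((Int.gcd G B : ℕ) : ℤ) ∣ B := Int.gcd_dvd_right _ _
      have heq : Q = B * k - G := by linarith
      rw [heq]
      exact dvd_sub (h2.mul_right k) h1
    exact Int.dvd_antisymm (by positivity) hQpos.le hdQ hQd
  refine ⟨hgcd1, hgcd2, ?_⟩
  have hQR : ((Int.gcd G ((4:ℤ) ^ (2 * N) - 1) : ℕ) : ℝ) = (Q : ℝ) := by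
    exact_mod_cast congrArg (Int.cast : ℤ → ℝ) hgcd2
  have h5Qr : (5:ℝ) * (Q:ℝ) = (4:ℝ)^N + 1 := by
    have := congrArg (Int.cast : ℤ → ℝ) h5Q
    push_cast at this
    simpa [hBdef] using this
  have hQne : (Q:ℝ) ≠ 0 := by
    have : (0:ℝ) < (Q:ℝ) := by exact_mod_cast hQpos
    linarith
  congr 1
  have h2N : (4:ℝ)^(2*N) = (4^N)^2 := by rw [two_mul, pow_add, sq]
  rw [hQR, div_eq_iff hQne, h2N]
  linear_combination ((1:ℝ) - (4:ℝ)^N) * h5Qr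
end
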